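/- For any vertex x ≠ o, the multiplication operator M_x := M_{δ_x} by the Dirac mass at x is a bounded operator on H_E with operator norm ‖M_x‖ = √(c(x)·R(x)), where R(x) = E(v_x) is the effective resistance between x and o. -/

import Mathlib

open scoped BigOperators ComplexOrder Classical

/-- A (resistance) network: a connected weighted graph with symmetric
nonnegative conductances, no self-loops, and finite total conductance at
each vertex. -/
structure Network (V : Type*) where
  c : V → V → ℝ
  nonneg : ∀ x y, 0 ≤ c x y
  symm : ∀ x y, c x y = c y x
  loopless : ∀ x, c x x = 0
  summ : ∀ x, Summable fun y => c x y
  connected : ∀ x y : V, Relation.ReflTransGen (fun a b => 0 < c a b) x y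

namespace Network

variable {V : Type*}

/-- Total conductance `c(x) = Σ_y c(x,y)`. -/
noncomputable def totalCond (N : Network V) (x : V) : ℝ := ∑' y, N.c x y

/-- The (sesquilinear) energy form `E(u,v)`. -/
noncomputable def energy (N : Network V) (u v : V → ℂ) : ℂ :=
  (1/2) * ∑' p : V × V,
    (N.c p.1 p.2 : ℂ) * (starRingEnd ℂ (u p.1) - starRingEnd ℂ (u p.2)) * (v p.1 - v p.2)

/-- The (real) energy `E(u) = (1/2) Σ c(x,y)|u(x)-u(y)|²`. -/
noncomputable def energyR (N : Network V) (u : V → ℂ) : ℝ :=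
  (1/2) * ∑' p : V × V, N.c p.1 p.2 * ‖u p.1 - u p.2‖ ^ 2

/-- `u` has finite energy iff the defining sum converges (absolutely). -/
def FiniteEnergy (N : Network V) (u : V → ℂ) : Prop :=
  Summable fun p : V × V => N.c p.1 p.2 * ‖u p.1 - u p.2‖ ^ 2

/-- The graph Laplacian `(Δu)(x) = Σ_y c(x,y)(u(x)-u(y))`. -/
noncomputable def lap (N : Network V) (u : V → ℂ) (x : V) : ℂ :=
  ∑' y, (N.c x y : ℂ) * (u x - u y)

end Network

/-- The Dirac mass at `x`. -/
noncomputable def delta {V : Type*} (x : V) : V → ℂ := fun y => if y = x then 1 else 0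

open scoped InnerProductSpace ComplexOrder BigOperators Classical

/-- Dirac's rank-one operator `|a⟩⟨b| : u ↦ ⟪b,u⟫ • a`. -/
noncomputable def rankOne {H : Type*} [NormedAddCommGroup H] [InnerProductSpace ℂ H]
    (a b : H) : H →L[ℂ] H := (innerSL ℂ b).smulRight a

/-- for `x ≠ o`, the multiplication operator `M_x = M_{δ_x}`
(characterized via the energy kernel: `⟪v_y, Mu⟫ = δ_x(y)⟪v_y,u⟫`) is bounded
with `‖M_x‖ = √(c(x)·R(x))`, where `R(x) = E(v_x) = ‖v_x‖²` and
`c(x) = E(δ_x) = ‖δ_x‖²`. -/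
theorem stmt10 {V H : Type*} [NormedAddCommGroup H] [InnerProductSpace ℂ H] [CompleteSpace H]
    (N : Network V) (o x : V) (hx : x ≠ o) (v : V → H) (δx : H)
    (hdense : Dense (↑(Submodule.span ℂ (v '' {y | y ≠ o})) : Set H))
    (hδ : ∀ y : V, y ≠ o → ⟪v y, δx⟫_ℂ = if y = x then 1 else 0)
    (hc : ‖δx‖ ^ 2 = N.totalCond x)
    (M : H →L[ℂ] H)
    (hM : ∀ (u : H) (y : V), y ≠ o →
      ⟪v y, M u⟫_ℂ = (if y = x then (1 : ℂ) else 0) * ⟪v y, u⟫_ℂ) :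
    ‖M‖ = Real.sqrt (N.totalCond x * ‖v x‖ ^ 2) := by
  -- Step 1: M u = ⟪v x, u⟫ • δx for all u.
  have key : ∀ u : H, M u = ⟪v x, u⟫_ℂ • δx := by
    intro u
    refine hdense.eq_of_inner_right ℂ fun w hw => ?_
    refine Submodule.span_induction ?_ ?_ ?_ ?_ hw
    · rintro _ ⟨y, hy, rfl⟩
      rw [hM u y hy, inner_smul_right, hδ y hy]
      by_cases h : y = x
      · subst h; simp
      · simp [h]
    · simp
    · intro a b _ _ ha hb
      rw [inner_add_left, inner_add_left, ha, hb]
    · intro r a _ ha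
      rw [inner_smul_left, inner_smul_left, ha]
  -- Step 2: identify M with the rank-one operator.
  have hMeq : M = rankOne δx (v x) := by
    ext u
    rw [key u]
    simp [rankOne]
  -- Step 3: compute the norm.
  rw [hMeq, rankOne, ContinuousLinearMap.norm_smulRight_apply, innerSL_apply_norm,
    ← hc]
  rw [show ‖δx‖ ^ 2 * ‖v x‖ ^ 2 = (‖δx‖ * ‖v x‖) ^ 2 by ring,
    Real.sqrt_sq (by positivity), mul_comm]
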